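/- Let T be a finite combinatorial tree, α ∈ [0,1), and i, j two non-adjacent nodes. Then κ^{or,α}_{ij} = (2(1−α)/d(i,j))·(1/deg(i) + 1/deg(j) − 1). -/

import Mathlib

set_option linter.unusedSectionVars false
set_option linter.unusedVariables false

section aux
open SimpleGraph Finset


variable {V : Type*} [DecidableEq V] {G : SimpleGraph V} {u v : V}

/-- In a tree, every path between two vertices has length equal to the distance. -/
lemma tree_path_length (hT : G.IsTree) {u v : V} (p : G.Walk u v) (hp : p.IsPath) :
    p.length = G.dist u v := by
  obtain ⟨q, hq⟩ := hT.isConnected.exists_walk_length_eq_dist u v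
  have huniq := (SimpleGraph.isAcyclic_iff_path_unique.mp hT.IsAcyclic)
    (⟨p, hp⟩ : G.Path u v) q.toPath
  have h1 : p.length = (q.toPath : G.Walk u v).length := by
    have := congrArg (fun r : G.Path u v => (r : G.Walk u v).length) huniq
    simpa using this
  have h2 : (q.toPath : G.Walk u v).length ≤ q.length := SimpleGraph.Walk.length_bypass_le _
  have h3 : G.dist u v ≤ (q.toPath : G.Walk u v).length := SimpleGraph.dist_le _
  omega

/-- In a tree, a vertex on a path splits the distance. -/
lemma tree_support_dist (hT : G.IsTree) {u v x : V} (p : G.Walk u v) (hp : p.IsPath)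
    (hx : x ∈ p.support) : G.dist u x + G.dist x v = G.dist u v := by
  have h1 := tree_path_length hT _ (hp.takeUntil hx)
  have h2 := tree_path_length hT _ (hp.dropUntil hx)
  have h3 := tree_path_length hT p hp
  have h4 := congrArg SimpleGraph.Walk.length (p.take_spec hx)
  rw [SimpleGraph.Walk.length_append] at h4
  omega

lemma adj_dist_one (h : G.Adj u v) : G.dist u v = 1 :=
  SimpleGraph.dist_eq_one_iff_adj.mpr h

/-- canonical path -/
lemma tree_exists_path (hT : G.IsTree) (u v : V) :
    ∃ p : G.Walk u v, p.IsPath ∧ p.length = G.dist u v := by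
  obtain ⟨q, hq⟩ := hT.isConnected.exists_walk_length_eq_dist u v
  exact ⟨q.toPath, q.toPath.2, tree_path_length hT _ q.toPath.2⟩

/-- A neighbor's distance dichotomy. -/
lemma neighbor_dist_dichotomy (hT : G.IsTree) {i j b : V} (hb : G.Adj i b) :
    G.dist b j + 1 = G.dist i j ∨ G.dist b j = G.dist i j + 1 := by
  obtain ⟨Q, hQ, hQl⟩ := tree_exists_path hT b j
  by_cases hi : i ∈ Q.support
  · right
    have := tree_support_dist hT Q hQ hi
    have h1 := adj_dist_one hb.symm
    omega
  · left
    have hpath : (SimpleGraph.Walk.cons hb Q).IsPath :=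
      (SimpleGraph.Walk.cons_isPath_iff hb Q).mpr ⟨hQ, hi⟩
    have := tree_path_length hT _ hpath
    rw [SimpleGraph.Walk.length_cons] at this
    omega

/-- Uniqueness of the closer neighbor. -/
lemma closer_neighbor_unique (hT : G.IsTree) {i j b c : V}
    (hb : G.Adj i b) (hc : G.Adj i c)
    (h1 : G.dist b j + 1 = G.dist i j) (h2 : G.dist c j + 1 = G.dist i j) : b = c := by
  obtain ⟨Qb, hQb, hQbl⟩ := tree_exists_path hT b j
  obtain ⟨Qc, hQc, hQcl⟩ := tree_exists_path hT c j
  have hib : i ∉ Qb.support := by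
    intro hmem
    have := tree_support_dist hT Qb hQb hmem
    have h3 := adj_dist_one hb.symm
    omega
  have hic : i ∉ Qc.support := by
    intro hmem
    have := tree_support_dist hT Qc hQc hmem
    have h3 := adj_dist_one hc.symm
    omega
  have hpb : (SimpleGraph.Walk.cons hb Qb).IsPath :=
    (SimpleGraph.Walk.cons_isPath_iff hb Qb).mpr ⟨hQb, hib⟩
  have hpc : (SimpleGraph.Walk.cons hc Qc).IsPath :=
    (SimpleGraph.Walk.cons_isPath_iff hc Qc).mpr ⟨hQc, hic⟩
  have huniq := (SimpleGraph.isAcyclic_iff_path_unique.mp hT.IsAcyclic)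
    (⟨_, hpb⟩ : G.Path i j) ⟨_, hpc⟩
  have hsup := congrArg (fun r : G.Path i j => (r : G.Walk i j).support) huniq
  simp only [SimpleGraph.Walk.support_cons] at hsup
  rw [Qb.support_eq_cons, Qc.support_eq_cons] at hsup
  simp only [List.cons.injEq] at hsup
  exact hsup.2.1

/-- Existence of the closer neighbor. -/
lemma closer_neighbor_exists (hT : G.IsTree) {i j : V} (hne : i ≠ j) :
    ∃ b, G.Adj i b ∧ G.dist b j + 1 = G.dist i j := by
  obtain ⟨P, hP, hPl⟩ := tree_exists_path hT i j
  cases P with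
  | nil => exact absurd rfl hne
  | cons h q =>
    refine ⟨_, h, ?_⟩
    have hq : q.IsPath := hP.of_cons
    have := tree_path_length hT q hq
    rw [SimpleGraph.Walk.length_cons] at hPl
    omega

/-- The key distance formula. -/
lemma dist_formula (hT : G.IsTree) {i j a b : V} (hne : i ≠ j) (hnadj : ¬ G.Adj i j)
    (ha : a = j ∨ G.Adj j a) (hb : b = i ∨ G.Adj i b) :
    G.dist a b + G.dist i j = G.dist a i + G.dist b j := by
  have hd2 : 2 ≤ G.dist i j := by
    have h1 : 0 < G.dist i j := hT.isConnected.pos_dist_of_ne hne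
    have h2 : G.dist i j ≠ 1 := fun h => hnadj (SimpleGraph.dist_eq_one_iff_adj.mp h)
    omega
  rcases hb with rfl | hb
  · rfl
  rcases ha with rfl | ha
  · have h1 : G.dist a b = G.dist b a := SimpleGraph.dist_comm
    have h2 : G.dist i a = G.dist a i := SimpleGraph.dist_comm
    omega
  -- main case : a ~ j, b ~ i
  have hab1 : G.dist i b = 1 := adj_dist_one hb
  have hab2 : G.dist b i = 1 := adj_dist_one hb.symm
  have hab3 : G.dist j a = 1 := adj_dist_one ha
  have hab4 : G.dist a j = 1 := adj_dist_one ha.symm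
  have hcab : G.dist a b = G.dist b a := SimpleGraph.dist_comm
  have hcij : G.dist i j = G.dist j i := SimpleGraph.dist_comm
  have hcai : G.dist a i = G.dist i a := SimpleGraph.dist_comm
  have hcbj : G.dist b j = G.dist j b := SimpleGraph.dist_comm
  rcases neighbor_dist_dichotomy (j := j) hT hb with hbc | hbf <;>
    rcases neighbor_dist_dichotomy (j := i) hT ha with hac | haf
  · -- both closer: dist a b = d - 2
    obtain ⟨Q, hQ, hQl⟩ := tree_exists_path hT b j
    have hRp : Q.reverse.IsPath := (SimpleGraph.Walk.isPath_reverse_iff Q).mpr hQ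
    have hRl : Q.reverse.length = G.dist b j := by
      rw [SimpleGraph.Walk.length_reverse]; exact hQl
    cases hR : Q.reverse with
    | nil =>
      rw [hR] at hRl
      simp at hRl
      omega
    | cons h r =>
      rw [hR] at hRp hRl
      have hr : r.IsPath := hRp.of_cons
      have hrl := tree_path_length hT r hr
      rw [SimpleGraph.Walk.length_cons] at hRl
      -- name the intermediate vertex
      rename_i a''
      have hja : G.dist j a'' = 1 := adj_dist_one h
      have htri1 : G.dist i j ≤ G.dist i a'' + G.dist a'' j := hT.isConnected.dist_triangle
      have htri2 : G.dist a'' i ≤ G.dist a'' b + G.dist b i := hT.isConnected.dist_triangle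
      have hc1 : G.dist a'' j = G.dist j a'' := SimpleGraph.dist_comm
      have hc2 : G.dist a'' i = G.dist i a'' := SimpleGraph.dist_comm
      have hc3 : G.dist a'' b = r.length := hrl.symm
      have haa : a = a'' := by
        apply closer_neighbor_unique (i := j) (j := i) hT ha h <;> omega
      subst haa
      have hcax : G.dist a b = r.length := hrl.symm
      omega
  · -- b closer, a farther: dist a b = d
    have htri1 : G.dist a b ≤ G.dist a j + G.dist j b := hT.isConnected.dist_triangle
    have htri2 : G.dist a i ≤ G.dist a b + G.dist b i := hT.isConnected.dist_triangle
    omega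
  · -- a closer, b farther
    have htri1 : G.dist a b ≤ G.dist a i + G.dist i b := hT.isConnected.dist_triangle
    have htri2 : G.dist b j ≤ G.dist b a + G.dist a j := hT.isConnected.dist_triangle
    omega
  · -- both farther: dist a b = d + 2
    obtain ⟨P, hP, hPl⟩ := tree_exists_path hT i j
    have hbP : b ∉ P.support := by
      intro hmem
      have := tree_support_dist hT P hP hmem
      omega
    have haP : a ∉ P.support := by
      intro hmem
      have := tree_support_dist hT P hP hmem
      omega
    have hne2 : a ≠ b := by
      intro h; subst h; omega
    have hcpath : ((P.reverse).concat hb).IsPath := by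
      rw [← SimpleGraph.Walk.isPath_reverse_iff]
      rw [SimpleGraph.Walk.reverse_concat, SimpleGraph.Walk.reverse_reverse]
      exact (SimpleGraph.Walk.cons_isPath_iff _ _).mpr ⟨hP, hbP⟩
    have hwpath : (SimpleGraph.Walk.cons ha.symm ((P.reverse).concat hb)).IsPath := by
      refine (SimpleGraph.Walk.cons_isPath_iff _ _).mpr ⟨hcpath, ?_⟩
      simp only [SimpleGraph.Walk.support_concat, SimpleGraph.Walk.support_reverse,
        List.concat_eq_append, List.mem_append, List.mem_reverse, List.mem_singleton]
      push_neg
      exact ⟨haP, hne2⟩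
    have := tree_path_length hT _ hwpath
    simp only [SimpleGraph.Walk.length_cons, SimpleGraph.Walk.length_concat,
      SimpleGraph.Walk.length_reverse] at this
    omega

end aux

/-- 1-Wasserstein distance on a graph w.r.t. the shortest path metric. -/
noncomputable def W1 {V : Type*} [Fintype V] (G : SimpleGraph V) (μ ν : V → ℝ) : ℝ :=
  sInf { c : ℝ | ∃ π : V → V → ℝ, (∀ i j, 0 ≤ π i j) ∧
    (∀ j, ∑ i, π i j = μ j) ∧ (∀ i, ∑ j, π i j = ν i) ∧
    c = ∑ i, ∑ j, π i j * (G.dist i j : ℝ) }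

/-- The α-lazy random walk measure at `x`. -/
noncomputable def lazy {V : Type*} [Fintype V] [DecidableEq V] (G : SimpleGraph V)
    [DecidableRel G.Adj] (α : ℝ) (x : V) : V → ℝ :=
  fun y => if y = x then α else if G.Adj x y then (1 - α) / (G.degree x : ℝ) else 0

section aux2
open SimpleGraph Finset
variable {V : Type*} [DecidableEq V] {G : SimpleGraph V} {u v : V}
section analytic
variable [Fintype V] [DecidableRel G.Adj]

lemma lazy_nonneg {α : ℝ} (h0 : 0 ≤ α) (h1 : α ≤ 1) (x y : V) : 0 ≤ lazy G α x y := by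
  unfold lazy
  split_ifs
  · exact h0
  · exact div_nonneg (by linarith) (Nat.cast_nonneg _)
  · exact le_rfl

lemma lazy_support {α : ℝ} {x y : V} (h : lazy G α x y ≠ 0) : y = x ∨ G.Adj x y := by
  unfold lazy at h
  split_ifs at h with h1 h2
  · exact Or.inl h1
  · exact Or.inr h2
  · exact absurd rfl h

lemma lazy_weighted_sum (α : ℝ) (x : V) (f : V → ℝ) :
    ∑ y, lazy G α x y * f y
      = α * f x + ((1 - α) / (G.degree x : ℝ)) * ∑ y ∈ G.neighborFinset x, f y := by
  have key : ∀ y, lazy G α x y * f y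
      = (if y = x then α * f y else 0)
        + (if G.Adj x y then ((1 - α) / (G.degree x : ℝ)) * f y else 0) := by
    intro y
    unfold lazy
    by_cases h : y = x
    · subst h
      simp [SimpleGraph.irrefl]
    · by_cases h2 : G.Adj x y <;> simp [h, h2]
  rw [Finset.sum_congr rfl (fun y _ => key y), Finset.sum_add_distrib]
  congr 1
  · rw [Finset.sum_ite_eq' Finset.univ x (fun y => α * f y)]
    simp
  · rw [← Finset.sum_filter, ← SimpleGraph.neighborFinset_eq_filter, Finset.mul_sum]

lemma lazy_sum (α : ℝ) {x : V} (hx : 0 < G.degree x) : ∑ y, lazy G α x y = 1 := by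
  have := lazy_weighted_sum (G := G) α x (fun _ => 1)
  simp only [mul_one, Finset.sum_const, SimpleGraph.card_neighborFinset_eq_degree,
    nsmul_eq_mul] at this
  have hdeg : (G.degree x : ℝ) ≠ 0 := Nat.cast_ne_zero.mpr hx.ne'
  calc ∑ y, lazy G α x y = α + (1 - α) / (G.degree x : ℝ) * (G.degree x : ℝ) := this
    _ = 1 := by field_simp; ring

lemma neighbor_dist_sum (hT : G.IsTree) {i j : V} (hne : i ≠ j) (hnadj : ¬ G.Adj i j) :
    (∑ b ∈ G.neighborFinset i, G.dist b j) + 2 = G.degree i * (G.dist i j + 1) := by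
  have hd2 : 2 ≤ G.dist i j := by
    have h1 : 0 < G.dist i j := hT.isConnected.pos_dist_of_ne hne
    have h2 : G.dist i j ≠ 1 := fun h => hnadj (SimpleGraph.dist_eq_one_iff_adj.mp h)
    omega
  obtain ⟨i', hi', hdi'⟩ := closer_neighbor_exists hT hne
  have hmem : i' ∈ G.neighborFinset i := by
    rw [SimpleGraph.mem_neighborFinset]; exact hi'
  rw [← Finset.add_sum_erase _ _ hmem]
  have herase : ∀ b ∈ (G.neighborFinset i).erase i', G.dist b j = G.dist i j + 1 := by
    intro b hb
    obtain ⟨hbne, hbmem⟩ := Finset.mem_erase.mp hb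
    rw [SimpleGraph.mem_neighborFinset] at hbmem
    rcases neighbor_dist_dichotomy (j := j) hT hbmem with hc | hf
    · exact absurd (closer_neighbor_unique hT hbmem hi' hc hdi') hbne
    · exact hf
  rw [Finset.sum_congr rfl herase, Finset.sum_const,
    Finset.card_erase_of_mem hmem, smul_eq_mul,
    SimpleGraph.card_neighborFinset_eq_degree, Nat.sub_mul, one_mul]
  have hdeg : 0 < G.degree i := by
    rw [← SimpleGraph.card_neighborFinset_eq_degree]
    exact Finset.card_pos.mpr ⟨i', hmem⟩
  have hmul : 1 * (G.dist i j + 1) ≤ G.degree i * (G.dist i j + 1) :=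
    Nat.mul_le_mul_right _ (by omega)
  rw [one_mul] at hmul
  omega

end analytic

end aux2

theorem stmt_13 {V : Type*} [Fintype V] [DecidableEq V] (G : SimpleGraph V)
    [DecidableRel G.Adj] (hT : G.IsTree) (α : ℝ) (hα : α ∈ Set.Ico (0 : ℝ) 1)
    (i j : V) (hne : i ≠ j) (hnadj : ¬ G.Adj i j) :
    1 - W1 G (lazy G α i) (lazy G α j) / (G.dist i j : ℝ) =
      (2 * (1 - α) / (G.dist i j : ℝ)) *
        (1 / (G.degree i : ℝ) + 1 / (G.degree j : ℝ) - 1) := by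
  obtain ⟨hα0, hα1⟩ := hα
  have hdpos : 0 < G.dist i j := hT.isConnected.pos_dist_of_ne hne
  have hdegi : 0 < G.degree i := by
    obtain ⟨b, hb, -⟩ := closer_neighbor_exists hT hne
    rw [← SimpleGraph.card_neighborFinset_eq_degree]
    exact Finset.card_pos.mpr ⟨b, (SimpleGraph.mem_neighborFinset G i b).mpr hb⟩
  have hdegj : 0 < G.degree j := by
    obtain ⟨a, ha, -⟩ := closer_neighbor_exists hT hne.symm
    rw [← SimpleGraph.card_neighborFinset_eq_degree]
    exact Finset.card_pos.mpr ⟨a, (SimpleGraph.mem_neighborFinset G j a).mpr ha⟩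
  set D : ℝ := (G.dist i j : ℝ) with hD
  have hDpos : (0:ℝ) < D := by rw [hD]; exact_mod_cast hdpos
  set μ := lazy G α i with hμdef
  set ν := lazy G α j with hνdef
  have hμsum : ∑ b, μ b = 1 := lazy_sum α hdegi
  have hνsum : ∑ a, ν a = 1 := lazy_sum α hdegj
  have hμ0 : ∀ b, 0 ≤ μ b := lazy_nonneg hα0 hα1.le i
  have hν0 : ∀ a, 0 ≤ ν a := lazy_nonneg hα0 hα1.le j
  set A : ℝ := ∑ a, ν a * (G.dist a i : ℝ) with hAdef
  set B : ℝ := ∑ b, μ b * (G.dist b j : ℝ) with hBdef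
  -- real-valued distance formula on the supports
  have hreal : ∀ a b : V, ν a ≠ 0 → μ b ≠ 0 →
      (G.dist a b : ℝ) = (G.dist a i : ℝ) + (G.dist b j : ℝ) - D := by
    intro a b hνa hμb
    have ha := lazy_support hνa
    have hb := lazy_support hμb
    have hnat := dist_formula hT hne hnadj ha hb
    have := congrArg (Nat.cast : ℕ → ℝ) hnat
    push_cast at this
    rw [hD]
    linarith
  -- the cost of every admissible transport plan
  have hcost : ∀ π : V → V → ℝ, (∀ a b, 0 ≤ π a b) → (∀ b, ∑ a, π a b = μ b) →
      (∀ a, ∑ b, π a b = ν a) →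
      ∑ a, ∑ b, π a b * (G.dist a b : ℝ) = A + B - D := by
    intro π hpos hm1 hm2
    have hterm : ∀ a b, π a b * (G.dist a b : ℝ)
        = π a b * (G.dist a i : ℝ) + π a b * (G.dist b j : ℝ) - π a b * D := by
      intro a b
      by_cases hz : π a b = 0
      · simp [hz]
      · have hπμ : π a b ≤ μ b := by
          rw [← hm1 b]
          exact Finset.single_le_sum (fun a' _ => hpos a' b) (Finset.mem_univ a)
        have hπν : π a b ≤ ν a := by
          rw [← hm2 a]
          exact Finset.single_le_sum (fun b' _ => hpos a b') (Finset.mem_univ b)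
        have hμb : μ b ≠ 0 := by
          intro h; exact hz (le_antisymm (h ▸ hπμ) (hpos a b))
        have hνa : ν a ≠ 0 := by
          intro h; exact hz (le_antisymm (h ▸ hπν) (hpos a b))
        rw [hreal a b hνa hμb]; ring
    have hrow : ∀ a, ∑ b, π a b * (G.dist a b : ℝ)
        = ν a * (G.dist a i : ℝ) + (∑ b, π a b * (G.dist b j : ℝ)) - ν a * D := by
      intro a
      rw [Finset.sum_congr rfl (fun b _ => hterm a b), Finset.sum_sub_distrib,
        Finset.sum_add_distrib, ← Finset.sum_mul, ← Finset.sum_mul, hm2 a]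
    rw [Finset.sum_congr rfl (fun a _ => hrow a), Finset.sum_sub_distrib,
      Finset.sum_add_distrib, ← Finset.sum_mul, hνsum, one_mul, Finset.sum_comm]
    have hcol : ∀ b, ∑ a, π a b * (G.dist b j : ℝ) = μ b * (G.dist b j : ℝ) := by
      intro b; rw [← Finset.sum_mul, hm1 b]
    rw [Finset.sum_congr rfl (fun b _ => hcol b)]
  -- the admissible-cost set is the singleton {A + B - D}
  have hset : { c : ℝ | ∃ π : V → V → ℝ, (∀ a b, 0 ≤ π a b) ∧
      (∀ b, ∑ a, π a b = μ b) ∧ (∀ a, ∑ b, π a b = ν a) ∧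
      c = ∑ a, ∑ b, π a b * (G.dist a b : ℝ) } = {A + B - D} := by
    ext c
    simp only [Set.mem_setOf_eq, Set.mem_singleton_iff]
    constructor
    · rintro ⟨π, hpos, hm1, hm2, rfl⟩
      exact hcost π hpos hm1 hm2
    · rintro rfl
      refine ⟨fun a b => ν a * μ b, fun a b => mul_nonneg (hν0 a) (hμ0 b),
        fun b => ?_, fun a => ?_, ?_⟩
      · rw [← Finset.sum_mul, hνsum, one_mul]
      · rw [← Finset.mul_sum, hμsum, mul_one]
      · exact (hcost _ (fun a b => mul_nonneg (hν0 a) (hμ0 b))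
          (fun b => by rw [← Finset.sum_mul, hνsum, one_mul])
          (fun a => by rw [← Finset.mul_sum, hμsum, mul_one])).symm
  have hW1 : W1 G μ ν = A + B - D := by
    unfold W1
    rw [hset, csInf_singleton]
  -- computing A and B
  have hsumNi : ∑ b ∈ G.neighborFinset i, (G.dist b j : ℝ)
      = (G.degree i : ℝ) * (D + 1) - 2 := by
    have hnat := neighbor_dist_sum hT hne hnadj
    have := congrArg (Nat.cast : ℕ → ℝ) hnat
    push_cast at this
    rw [hD]
    linarith
  have hsumNj : ∑ a ∈ G.neighborFinset j, (G.dist a i : ℝ)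
      = (G.degree j : ℝ) * (D + 1) - 2 := by
    have hnat := neighbor_dist_sum hT hne.symm (fun h => hnadj h.symm)
    have := congrArg (Nat.cast : ℕ → ℝ) hnat
    have hcomm : G.dist j i = G.dist i j := SimpleGraph.dist_comm
    rw [hcomm] at this
    push_cast at this
    rw [hD]
    linarith
  have hA : A = α * D + ((1 - α) / (G.degree j : ℝ)) * ((G.degree j : ℝ) * (D + 1) - 2) := by
    rw [hAdef, hνdef, lazy_weighted_sum, hsumNj]
    have hcomm : G.dist j i = G.dist i j := SimpleGraph.dist_comm
    rw [hcomm]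
  have hB : B = α * D + ((1 - α) / (G.degree i : ℝ)) * ((G.degree i : ℝ) * (D + 1) - 2) := by
    rw [hBdef, hμdef, lazy_weighted_sum, hsumNi]
  have hDi : (G.degree i : ℝ) ≠ 0 := Nat.cast_ne_zero.mpr hdegi.ne'
  have hDj : (G.degree j : ℝ) ≠ 0 := Nat.cast_ne_zero.mpr hdegj.ne'
  rw [hW1, hA, hB]
  field_simp
  ring
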